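/- Let G and H be finitely generated groups that are two-sided configuration equivalent. Then the direct product of the quotients G/N, taken over all normal subgroups N of G of finite index, is isomorphic as a group to the direct product of the quotients H/M, taken over all normal subgroups M of H of finite index. -/

import Mathlib

/-- `g` is an ordered generating tuple of `G`. -/
def Generates {G : Type*} [Group G] {n : ℕ} (g : Fin n → G) : Prop :=
  Subgroup.closure (Set.range g) = ⊤

/-- The two-sided configuration set of the configuration pair `(g, c)`: a two-sided
configuration is a tuple `(c₀, (c₁, …, c_n), (c_{n+1}, …, c_{2n}))` of colors realized by
some `x ∈ G`, i.e. `c x = c₀`, `c (gᵢ * x) = cᵢ` and `c (x * gᵢ) = c_{n+i}` for all `i`. -/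
def ConfigT {G : Type*} [Group G] {n m : ℕ} (g : Fin n → G) (c : G → Fin m) :
    Set (Fin m × (Fin n → Fin m) × (Fin n → Fin m)) :=
  { p | ∃ x : G, c x = p.1 ∧ (∀ i, c (g i * x) = p.2.1 i) ∧ (∀ i, c (x * g i) = p.2.2 i) }

/-- Two-sided configuration equivalence of groups. -/
def ConfigTEquiv (G H : Type*) [Group G] [Group H] : Prop :=
  (∀ (n m : ℕ) (g : Fin n → G) (c : G → Fin m), Generates g →
    ∃ (h : Fin n → H) (d : H → Fin m), Generates h ∧ ConfigT g c = ConfigT h d) ∧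
  (∀ (n m : ℕ) (h : Fin n → H) (d : H → Fin m), Generates h →
    ∃ (g : Fin n → G) (c : G → Fin m), Generates g ∧ ConfigT h d = ConfigT g c)

/-- The direct product of the quotients `G ⧸ N`, taken over all normal subgroups `N` of `G`
of finite index. -/
def FiniteIndexQuotProd (G : Type*) [Group G] : Type _ :=
  ∀ N : {N : Subgroup G // N.Normal ∧ N.index ≠ 0}, G ⧸ N.1

noncomputable instance (G : Type*) [Group G] : Group (FiniteIndexQuotProd G) :=
  @Pi.group _ _ fun N => @QuotientGroup.Quotient.group G _ N.1 N.2.1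

open Subgroup QuotientGroup

/-! ### Auxiliary material -/

/-- `Equiv.permCongr` as a `MulEquiv`. -/
def permCongrMulEquiv {α β : Type*} (e : α ≃ β) : Equiv.Perm α ≃* Equiv.Perm β where
  toEquiv := e.permCongr
  map_mul' σ τ := by
    ext x
    simp [Equiv.permCongr_apply, Equiv.Perm.mul_apply]

/-- Reindexing a product of groups. -/
noncomputable def piReindexMul {ι κ : Type*} (X : ι → Type*) [∀ i, Group (X i)] (σ : κ ≃ ι) :
    (∀ i, X i) ≃* (∀ k, X (σ k)) :=
  { (Equiv.piCongrLeft X σ).symm with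
    map_mul' := fun _ _ => rfl }

/-- Matching products of groups along a bijection with isomorphisms. -/
noncomputable def piMatchMul {ι κ : Type*} (X : ι → Type*) (Y : κ → Type*)
    [∀ i, Group (X i)] [∀ k, Group (Y k)] (σ : κ ≃ ι) (e : ∀ k, X (σ k) ≃* Y k) :
    (∀ i, X i) ≃* (∀ k, Y k) :=
  (piReindexMul X σ).trans (MulEquiv.piCongrRight e)

/-- The quotient by a comap of a normal subgroup along a surjection. -/
noncomputable def quotComap {X Y : Type*} [Group X] [Group Y] (f : X →* Y)
    (hf : Function.Surjective f) (T : Subgroup Y) [T.Normal] :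
    X ⧸ T.comap f ≃* Y ⧸ T :=
  (quotientMulEquivOfEq (by rw [← MonoidHom.comap_ker, ker_mk'])).trans
    (quotientKerEquivOfSurjective ((mk' T).comp f) ((mk'_surjective (N := T)).comp hf))

section Transfer

variable {X Y : Type*} [Group X] [Group Y]

/-- Transfer a subgroup along an isomorphism of quotients. -/
def subTransfer (KX : Subgroup X) (KY : Subgroup Y) [KX.Normal] [KY.Normal]
    (Φ : (X ⧸ KX) ≃* (Y ⧸ KY)) (N : Subgroup X) : Subgroup Y :=
  Subgroup.comap (mk' KY) (Subgroup.map Φ.toMonoidHom (Subgroup.map (mk' KX) N))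

variable (KX : Subgroup X) (KY : Subgroup Y) [KX.Normal] [KY.Normal]
  (Φ : (X ⧸ KX) ≃* (Y ⧸ KY)) (N : Subgroup X)

theorem subTransfer_normal (hN : N.Normal) : (subTransfer KX KY Φ N).Normal :=
  Subgroup.Normal.comap
    (((hN.map (mk' KX) (mk'_surjective KX)).map Φ.toMonoidHom Φ.surjective)) _

theorem subTransfer_index (hK : KX ≤ N) : (subTransfer KX KY Φ N).index = N.index := by
  have h1 : (mk' KX).ker ≤ N := by rw [ker_mk']; exact hK
  have h2 : (Φ.toMonoidHom).ker ≤ Subgroup.map (mk' KX) N := by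
    rw [(MonoidHom.ker_eq_bot_iff _).2 Φ.injective]; exact bot_le
  rw [subTransfer, Subgroup.index_comap_of_surjective _ (mk'_surjective KY),
    Subgroup.index_map_eq _ Φ.surjective h2, Subgroup.index_map_eq _ (mk'_surjective KX) h1]

instance subTransfer_normal' [hN : N.Normal] : (subTransfer KX KY Φ N).Normal :=
  subTransfer_normal KX KY Φ N hN

theorem subTransfer_iso [hN : N.Normal] (hK : KX ≤ N) :
    Nonempty ((X ⧸ N) ≃* (Y ⧸ subTransfer KX KY Φ N)) := by
  haveI : (Subgroup.map (mk' KX) N).Normal := hN.map (mk' KX) (mk'_surjective KX)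
  haveI : (Subgroup.map Φ.toMonoidHom (Subgroup.map (mk' KX) N)).Normal :=
    (hN.map (mk' KX) (mk'_surjective KX)).map Φ.toMonoidHom Φ.surjective
  have h1 : (mk' KX).ker ≤ N := by rw [ker_mk']; exact hK
  refine ⟨?_⟩
  have e3 : X ⧸ N ≃* X ⧸ (Subgroup.map (mk' KX) N).comap (mk' KX) :=
    quotientMulEquivOfEq (Subgroup.comap_map_eq_self h1).symm
  have e4 : X ⧸ (Subgroup.map (mk' KX) N).comap (mk' KX) ≃* (X ⧸ KX) ⧸ Subgroup.map (mk' KX) N :=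
    quotComap (mk' KX) (mk'_surjective KX) _
  have e5 : (X ⧸ KX) ⧸ Subgroup.map (mk' KX) N ≃*
      (Y ⧸ KY) ⧸ Subgroup.map Φ.toMonoidHom (Subgroup.map (mk' KX) N) :=
    QuotientGroup.congr _ _ Φ rfl
  have e6 : (Y ⧸ KY) ⧸ Subgroup.map Φ.toMonoidHom (Subgroup.map (mk' KX) N) ≃*
      Y ⧸ subTransfer KX KY Φ N :=
    (quotComap (mk' KY) (mk'_surjective KY) _).symm
  exact ((e3.trans e4).trans e5).trans e6

theorem subTransfer_subTransfer (hK : KX ≤ N) :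
    subTransfer KY KX Φ.symm (subTransfer KX KY Φ N) = N := by
  have h1 : (mk' KX).ker ≤ N := by rw [ker_mk']; exact hK
  have hcomp : Φ.symm.toMonoidHom.comp Φ.toMonoidHom = MonoidHom.id (X ⧸ KX) := by
    ext x; simp
  rw [subTransfer, subTransfer,
    Subgroup.map_comap_eq_self_of_surjective (mk'_surjective KY),
    Subgroup.map_map, hcomp, Subgroup.map_id, Subgroup.comap_map_eq_self h1]

end Transfer

section Config

variable {G H : Type*} [Group G] [Group H]

/-- The key configuration lemma: every finite quotient of `G` is a quotient of `H`. -/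
theorem exists_surjective_quot [Group.FG G]
    (hstep : ∀ (n m : ℕ) (g : Fin n → G) (c : G → Fin m), Generates g →
      ∃ (h : Fin n → H) (d : H → Fin m), Generates h ∧ ConfigT g c = ConfigT h d)
    (N : Subgroup G) [hN : N.Normal] (hNi : N.index ≠ 0) :
    ∃ f : H →* G ⧸ N, Function.Surjective f := by
  classical
  obtain ⟨S, -, hS⟩ := Group.rank_spec G
  let g : Fin S.card → G := fun i => (S.equivFin.symm i : G)
  have hg : Generates g := by
    unfold Generates
    have hr : Set.range g = (S : Set G) := by
      ext x
      constructor
      · rintro ⟨i, rfl⟩; exact (S.equivFin.symm i).2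
      · intro hx; exact ⟨S.equivFin ⟨x, hx⟩, by simp [g]⟩
    rw [hr, hS]
  haveI : Finite (G ⧸ N) := Nat.finite_of_card_ne_zero (by rwa [← Subgroup.index_eq_card])
  haveI : Fintype (G ⧸ N) := Fintype.ofFinite _
  let β : (G ⧸ N) ≃ Fin N.index :=
    Fintype.equivFinOfCardEq (by rw [← Nat.card_eq_fintype_card, ← Subgroup.index_eq_card])
  let c : G → Fin N.index := fun x => β (QuotientGroup.mk x)
  obtain ⟨h, d, hgen, hcfg⟩ := hstep _ _ g c hg
  let ψ : H → G ⧸ N := fun y => β.symm (d y)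
  have key : ∀ (y : H) (i), ψ (h i * y) = QuotientGroup.mk (g i) * ψ y := by
    intro y i
    have hy : (⟨d y, fun i => d (h i * y), fun i => d (y * h i)⟩ :
        Fin N.index × (Fin S.card → Fin N.index) × (Fin S.card → Fin N.index)) ∈ ConfigT h d :=
      ⟨y, rfl, fun _ => rfl, fun _ => rfl⟩
    rw [← hcfg] at hy
    obtain ⟨x, hx0, hx1, -⟩ := hy
    have hx0' : c x = d y := hx0
    have hx1' : c (g i * x) = d (h i * y) := hx1 i
    have e0 : ψ y = QuotientGroup.mk x := by
      show β.symm (d y) = _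
      rw [← hx0']
      simp [c]
    have e1 : ψ (h i * y) = QuotientGroup.mk (g i * x) := by
      show β.symm (d (h i * y)) = _
      rw [← hx1']
      simp [c]
    rw [e0, e1, QuotientGroup.mk_mul]
  let T : Subgroup H :=
    { carrier := {u | ∀ y, ψ (u * y) = ψ u * (ψ 1)⁻¹ * ψ y}
      one_mem' := by intro y; simp
      mul_mem' := by
        intro a b ha hb y
        have hassoc : a * b * y = a * (b * y) := mul_assoc a b y
        rw [hassoc, ha (b * y), hb y, ha b]
        group
      inv_mem' := by
        intro a ha y
        have h1 := ha (a⁻¹ * y)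
        rw [mul_inv_cancel_left] at h1
        have h2 := ha a⁻¹
        rw [mul_inv_cancel] at h2
        have e1 : ψ (a⁻¹ * y) = (ψ 1) * (ψ a)⁻¹ * ψ y := by rw [h1]; group
        have e2 : ψ a⁻¹ = (ψ 1) * (ψ a)⁻¹ * ψ 1 :=
          mul_left_cancel (a := ψ a * (ψ 1)⁻¹) (by rw [← h2]; group)
        rw [e1, e2]; group }
  have hrange : Set.range h ⊆ (T : Set H) := by
    rintro _ ⟨i, rfl⟩
    show ∀ y, ψ (h i * y) = ψ (h i) * (ψ 1)⁻¹ * ψ y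
    intro y
    have e3 : ψ (h i) = QuotientGroup.mk (g i) * ψ 1 := by
      have := key 1 i; rwa [mul_one] at this
    rw [key y i, e3]; group
  have hTtop : ∀ u : H, ∀ y, ψ (u * y) = ψ u * (ψ 1)⁻¹ * ψ y := by
    intro u
    have : (⊤ : Subgroup H) ≤ T := hgen ▸ (Subgroup.closure_le T).2 hrange
    exact this (Subgroup.mem_top u)
  let Φ : H →* G ⧸ N := MonoidHom.mk' (fun u => ψ u * (ψ 1)⁻¹) (by
    intro a b
    show ψ (a * b) * (ψ 1)⁻¹ = (ψ a * (ψ 1)⁻¹) * (ψ b * (ψ 1)⁻¹)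
    rw [hTtop a b]
    group)
  refine ⟨Φ, ?_⟩
  rw [← MonoidHom.range_eq_top, eq_top_iff]
  have hcl : Subgroup.closure ((QuotientGroup.mk' N) '' Set.range g) = ⊤ := by
    rw [← MonoidHom.map_closure (QuotientGroup.mk' N), hg]
    exact Subgroup.map_top_of_surjective _ (QuotientGroup.mk'_surjective N)
  rw [← hcl]
  refine (Subgroup.closure_le _).2 ?_
  rintro _ ⟨x, ⟨i, rfl⟩, rfl⟩
  refine ⟨h i, ?_⟩
  show ψ (h i) * (ψ 1)⁻¹ = _
  have e3 : ψ (h i) = QuotientGroup.mk (g i) * ψ 1 := by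
    have := key 1 i; rwa [mul_one] at this
  rw [e3, mul_inv_cancel_right]
  rfl

/-- A finitely generated group has finitely many normal subgroups of a given finite index. -/
theorem finite_setOf_normal_index [Group.FG G] (d : ℕ) (hd : d ≠ 0) :
    {N : Subgroup G | N.Normal ∧ N.index = d}.Finite := by
  classical
  rw [← Set.finite_coe_iff]
  obtain ⟨S, -, hS⟩ := Group.rank_spec G
  have key : ∀ N : {N : Subgroup G // N.Normal ∧ N.index = d},
      ∃ φ : G →* Equiv.Perm (Fin d), φ.ker = N.1 := by
    rintro ⟨N, hN, hNd⟩
    haveI := hN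
    haveI : Finite (G ⧸ N) :=
      Nat.finite_of_card_ne_zero (by rw [← Subgroup.index_eq_card, hNd]; exact hd)
    haveI : Fintype (G ⧸ N) := Fintype.ofFinite _
    have hcard : Fintype.card (G ⧸ N) = d := by
      rw [← Nat.card_eq_fintype_card, ← Subgroup.index_eq_card, hNd]
    let e : (G ⧸ N) ≃ Fin d := Fintype.equivFinOfCardEq hcard
    refine ⟨(permCongrMulEquiv e).toMonoidHom.comp (MulAction.toPermHom G (G ⧸ N)), ?_⟩
    have hker : ((permCongrMulEquiv e).toMonoidHom.comp (MulAction.toPermHom G (G ⧸ N))).ker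
        = (MulAction.toPermHom G (G ⧸ N)).ker := by
      ext x
      simp only [MonoidHom.mem_ker, MonoidHom.comp_apply]
      constructor
      · intro hx
        have hx2 : (permCongrMulEquiv e) ((MulAction.toPermHom G (G ⧸ N)) x)
            = (permCongrMulEquiv e) 1 := by rw [map_one]; exact hx
        exact (permCongrMulEquiv e).injective hx2
      · intro hx
        rw [hx, map_one]
    rw [hker, ← Subgroup.normalCore_eq_ker, Subgroup.normalCore_eq_self]
  choose φ hφ using key
  have hinj : Function.Injective
      (fun N : {N : Subgroup G // N.Normal ∧ N.index = d} => fun s : S => φ N s) := by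
    intro N N' hNN'
    have heq : φ N = φ N' := by
      apply MonoidHom.eq_of_eqOn_dense hS
      intro x hx
      exact congrFun hNN' ⟨x, hx⟩
    ext1
    rw [← hφ N, ← hφ N', heq]
  exact Finite.of_injective _ hinj

end Config

section Kn

variable (G : Type*) [Group G]

/-- The set of normal subgroups of index at most `n` (and finite). -/
def belowSet (n : ℕ) : Set (Subgroup G) := {N | N.Normal ∧ N.index ≠ 0 ∧ N.index ≤ n}

theorem belowSet_finite [Group.FG G] (n : ℕ) : (belowSet G n).Finite := by
  have hsub : belowSet G n ⊆ ⋃ d ∈ Set.Icc 1 n, {N : Subgroup G | N.Normal ∧ N.index = d} := by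
    intro N hN
    simp only [Set.mem_iUnion]
    exact ⟨N.index, ⟨Nat.one_le_iff_ne_zero.2 hN.2.1, hN.2.2⟩, hN.1, rfl⟩
  exact Set.Finite.subset (Set.Finite.biUnion (Set.finite_Icc 1 n)
    (fun d hd => finite_setOf_normal_index d (Nat.one_le_iff_ne_zero.1 hd.1))) hsub

/-- The intersection of all normal subgroups of index at most `n`. -/
def Kn (n : ℕ) : Subgroup G := sInf (belowSet G n)

instance Kn_normal (n : ℕ) : (Kn G n).Normal := by
  constructor
  intro x hx gg
  rw [Kn, Subgroup.mem_sInf] at hx ⊢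
  intro N hN
  exact hN.1.conj_mem x (hx N hN) gg

theorem Kn_le {G : Type*} [Group G] {n : ℕ} {N : Subgroup G} (h : N ∈ belowSet G n) :
    Kn G n ≤ N := sInf_le h

theorem Kn_index [Group.FG G] (n : ℕ) : (Kn G n).index ≠ 0 := by
  haveI : Finite (belowSet G n) := (belowSet_finite G n).to_subtype
  have hfi : (Kn G n).FiniteIndex := by
    rw [Kn, sInf_eq_iInf']
    exact Subgroup.finiteIndex_iInf fun N => ⟨N.2.2.1⟩
  exact hfi.index_ne_zero

end Kn

section Level

variable {G H : Type*} [Group G] [Group H]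

theorem level_surj [Group.FG G] [Group.FG H]
    (hstep : ∀ (n m : ℕ) (g : Fin n → G) (c : G → Fin m), Generates g →
      ∃ (h : Fin n → H) (d : H → Fin m), Generates h ∧ ConfigT g c = ConfigT h d)
    (n : ℕ) :
    ∃ F : H ⧸ Kn H n →* G ⧸ Kn G n, Function.Surjective F := by
  obtain ⟨f, hf⟩ := exists_surjective_quot hstep (Kn G n) (Kn_index G n)
  have hker : Kn H n ≤ f.ker := by
    intro x hx
    rw [MonoidHom.mem_ker]
    obtain ⟨y, hy⟩ := QuotientGroup.mk'_surjective (Kn G n) (f x)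
    have hyK : y ∈ Kn G n := by
      rw [Kn, Subgroup.mem_sInf]
      intro N hN
      haveI := hN.1
      have hle : Kn G n ≤ N.comap (MonoidHom.id G) := by
        rw [Subgroup.comap_id]; exact Kn_le hN
      set p := (QuotientGroup.map (Kn G n) N (MonoidHom.id G) hle).comp f with hp
      have hpsurj : Function.Surjective p := by
        intro z
        obtain ⟨w, rfl⟩ := QuotientGroup.mk'_surjective N z
        obtain ⟨u, hu⟩ := hf (QuotientGroup.mk' (Kn G n) w)
        refine ⟨u, ?_⟩
        rw [hp, MonoidHom.comp_apply, hu, QuotientGroup.map_mk']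
        rfl
      have hindex : p.ker.index = N.index := by
        rw [Subgroup.index_eq_card, Subgroup.index_eq_card]
        exact Nat.card_congr (QuotientGroup.quotientKerEquivOfSurjective p hpsurj).toEquiv
      have hmem : p.ker ∈ belowSet H n :=
        ⟨MonoidHom.normal_ker p, by rw [hindex]; exact hN.2.1, by rw [hindex]; exact hN.2.2⟩
      have hxker : x ∈ p.ker := Kn_le hmem hx
      rw [MonoidHom.mem_ker, hp, MonoidHom.comp_apply, ← hy, QuotientGroup.map_mk'] at hxker
      exact (QuotientGroup.eq_one_iff y).1 hxker
    rw [← hy]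
    exact (QuotientGroup.eq_one_iff y).2 hyK
  refine ⟨QuotientGroup.lift (Kn H n) f (fun x hx => MonoidHom.mem_ker.1 (hker hx)), ?_⟩
  intro z
  obtain ⟨w, hw⟩ := hf z
  exact ⟨QuotientGroup.mk w, hw⟩

theorem level_iso [Group.FG G] [Group.FG H] (hGH : ConfigTEquiv G H) (n : ℕ) :
    Nonempty ((G ⧸ Kn G n) ≃* (H ⧸ Kn H n)) := by
  obtain ⟨F1, hF1⟩ := level_surj hGH.1 n
  obtain ⟨F2, hF2⟩ := level_surj hGH.2 n
  haveI : Finite (G ⧸ Kn G n) :=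
    Nat.finite_of_card_ne_zero (by rw [← Subgroup.index_eq_card]; exact Kn_index G n)
  haveI : Finite (H ⧸ Kn H n) :=
    Nat.finite_of_card_ne_zero (by rw [← Subgroup.index_eq_card]; exact Kn_index H n)
  have hcard : Nat.card (G ⧸ Kn G n) = Nat.card (H ⧸ Kn H n) :=
    le_antisymm (Nat.card_le_card_of_surjective F1 hF1)
      (Nat.card_le_card_of_surjective F2 hF2)
  exact ⟨MulEquiv.ofBijective F2 ((Nat.bijective_iff_surjective_and_card F2).2 ⟨hF2, hcard⟩)⟩

end Level

/-- Abbreviation for the quotient of `G` by a (bundled) finite-index normal subgroup. -/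
def QG (G : Type*) [Group G] (N : {N : Subgroup G // N.Normal ∧ N.index ≠ 0}) : Type _ :=
  G ⧸ N.1

noncomputable instance instGroupQG (G : Type*) [Group G]
    (N : {N : Subgroup G // N.Normal ∧ N.index ≠ 0}) : Group (QG G N) :=
  @QuotientGroup.Quotient.group G _ N.1 N.2.1

/-- Casting `QG` along an equality of bundled subgroups. -/
noncomputable def QGcast {G : Type*} [Group G] {a b : {N : Subgroup G // N.Normal ∧ N.index ≠ 0}}
    (h : a = b) : QG G a ≃* QG G b := by subst h; exact MulEquiv.refl _

section Fiber

variable {G H : Type*} [Group G] [Group H]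

theorem fiber_matching [Group.FG G] [Group.FG H] (hGH : ConfigTEquiv G H) (d : ℕ) :
    ∃ e : {a : {N : Subgroup G // N.Normal ∧ N.index ≠ 0} // a.1.index = d} ≃
          {b : {M : Subgroup H // M.Normal ∧ M.index ≠ 0} // b.1.index = d},
      ∀ a, Nonempty (QG G a.1 ≃* QG H (e a).1) := by
  by_cases hd : d = 0
  · subst hd
    haveI h1 : IsEmpty {a : {N : Subgroup G // N.Normal ∧ N.index ≠ 0} // a.1.index = 0} :=
      ⟨fun a => a.1.2.2 a.2⟩
    haveI h2 : IsEmpty {b : {M : Subgroup H // M.Normal ∧ M.index ≠ 0} // b.1.index = 0} :=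
      ⟨fun b => b.1.2.2 b.2⟩
    exact ⟨Equiv.equivOfIsEmpty _ _, fun a => (IsEmpty.false a).elim⟩
  · obtain ⟨Φ⟩ := level_iso hGH d
    have hKG : ∀ a : {a : {N : Subgroup G // N.Normal ∧ N.index ≠ 0} // a.1.index = d},
        Kn G d ≤ a.1.1 := fun a => Kn_le ⟨a.1.2.1, a.1.2.2, le_of_eq a.2⟩
    have hKH : ∀ b : {b : {M : Subgroup H // M.Normal ∧ M.index ≠ 0} // b.1.index = d},
        Kn H d ≤ b.1.1 := fun b => Kn_le ⟨b.1.2.1, b.1.2.2, le_of_eq b.2⟩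
    refine ⟨⟨fun a =>
        ⟨⟨subTransfer (Kn G d) (Kn H d) Φ a.1.1,
          subTransfer_normal _ _ _ _ a.1.2.1,
          by rw [subTransfer_index _ _ _ _ (hKG a)]; exact a.1.2.2⟩,
          by show (subTransfer _ _ _ _).index = d
             rw [subTransfer_index _ _ _ _ (hKG a)]; exact a.2⟩,
      fun b =>
        ⟨⟨subTransfer (Kn H d) (Kn G d) Φ.symm b.1.1,
          subTransfer_normal _ _ _ _ b.1.2.1,
          by rw [subTransfer_index _ _ _ _ (hKH b)]; exact b.1.2.2⟩,
          by show (subTransfer _ _ _ _).index = d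
             rw [subTransfer_index _ _ _ _ (hKH b)]; exact b.2⟩, ?_, ?_⟩, ?_⟩
    · intro a
      apply Subtype.ext
      apply Subtype.ext
      show subTransfer (Kn H d) (Kn G d) Φ.symm (subTransfer (Kn G d) (Kn H d) Φ a.1.1) = a.1.1
      exact subTransfer_subTransfer _ _ _ _ (hKG a)
    · intro b
      apply Subtype.ext
      apply Subtype.ext
      show subTransfer (Kn G d) (Kn H d) Φ (subTransfer (Kn H d) (Kn G d) Φ.symm b.1.1) = b.1.1
      have := subTransfer_subTransfer (Kn H d) (Kn G d) Φ.symm b.1.1 (hKH b)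
      rwa [MulEquiv.symm_symm] at this
    · intro a
      haveI := a.1.2.1
      exact subTransfer_iso (Kn G d) (Kn H d) Φ a.1.1 (hKG a)

end Fiber

theorem stmt11 (G H : Type*) [Group G] [Group H] [Group.FG G] [Group.FG H]
    (hGH : ConfigTEquiv G H) :
    Nonempty (FiniteIndexQuotProd G ≃* FiniteIndexQuotProd H) := by
  classical
  choose e he using fun d => fiber_matching hGH d
  let τ : {N : Subgroup G // N.Normal ∧ N.index ≠ 0} ≃ {M : Subgroup H // M.Normal ∧ M.index ≠ 0} :=
    ((Equiv.sigmaFiberEquiv (fun a : {N : Subgroup G // N.Normal ∧ N.index ≠ 0} =>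
        a.1.index)).symm.trans
      (Equiv.sigmaCongrRight e)).trans
      (Equiv.sigmaFiberEquiv (fun b : {M : Subgroup H // M.Normal ∧ M.index ≠ 0} => b.1.index))
  have hτ : ∀ a, Nonempty (QG G a ≃* QG H (τ a)) := fun a => he a.1.index ⟨a, rfl⟩
  have hiso : ∀ b, Nonempty (QG G (τ.symm b) ≃* QG H b) := by
    intro b
    obtain ⟨ee⟩ := hτ (τ.symm b)
    exact ⟨ee.trans (QGcast (τ.apply_symm_apply b))⟩
  exact ⟨piMatchMul (QG G) (QG H) τ.symm (fun b => (hiso b).some)⟩
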